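/- Let S be a totally ordered idempotent semifield and f ∈ S[x_0,…,x_n] homogeneous of degree e. For each d ≥ e, let [f]_d ⊆ S^{Δ^n_d} be the stable sum of the rows of the Macaulay matrix D_d(f) (a tropical linear space of rank C(n+d−e, d−e)). Then multiplication by any variable x_i maps [f]_d into [f]_{d+1}; consequently the graded module [f] = ⊕_d [f]_d is a homogeneous ideal of S[x_0,…,x_n] each of whose graded pieces is a tropical linear space (a tropical ideal). -/

import Mathlib

/-! STATEMENT 19: Let `f` be a nonzero homogeneous polynomial of degree `e`
over a totally ordered idempotent semifield `S`.  For `d ≥ e`, the Plücker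
vector `q d` of the stable sum of the rows of the Macaulay matrix `D_d(f)` is
given by the tropical maximal minors of `D_d(f)`; it is a tropical Plücker
vector of rank `C(n + d - e, d - e)`, and multiplication by any variable `x_i`
maps the tropical linear space `[f]_d` (the cocircuit span of `q d`) into
`[f]_{d+1}`; consequently `[f] = ⊕_d [f]_d` is a homogeneous ideal each of
whose graded pieces is a tropical linear space, i.e. a tropical ideal. -/

open scoped Classical

noncomputable section

local instance tropOrderBot {S : Type*} [LinearOrderedCommGroupWithZero S] :
    OrderBot S where
  bot := 0
  bot_le _ := zero_le'

variable {S : Type*} [LinearOrderedCommGroupWithZero S]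

/-- A tropical sum tropically vanishes if deleting any one term leaves it
unchanged. -/
def TropVanishes {ι : Type*} [DecidableEq ι] (T : Finset ι) (g : ι → S) : Prop :=
  ∀ j ∈ T, (T.erase j).sup g = T.sup g

/-- Tropical Plücker vector (valuated matroid) of rank `d`. -/
def IsTropPlucker {ι : Type*} [DecidableEq ι] (d : ℕ) (p : Finset ι → S) : Prop :=
  (∃ A, p A ≠ 0) ∧ (∀ A, p A ≠ 0 → A.card = d) ∧
    ∀ A B : Finset ι, A.card = d + 1 → B.card = d - 1 →
      TropVanishes (A \ B) fun i => p (A.erase i) * p (insert i B)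

/-- Submodule of `S^ι`. -/
def IsSubmodS {ι : Type*} (M : Set (ι → S)) : Prop :=
  (fun _ => 0) ∈ M ∧ (∀ v ∈ M, ∀ w ∈ M, (fun i => max (v i) (w i)) ∈ M) ∧
    ∀ c : S, ∀ v ∈ M, (fun i => c * v i) ∈ M

/-- The submodule generated by a set. -/
def spanS {ι : Type*} (G : Set (ι → S)) : Set (ι → S) :=
  ⋂₀ {M | IsSubmodS M ∧ G ⊆ M}

/-- The cocircuit of `q` associated with a set `C`. -/
def cocirc {ι : Type*} [DecidableEq ι] (q : Finset ι → S) (C : Finset ι) :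
    ι → S :=
  fun i => if i ∈ C then 0 else q (insert i C)

/-- The tropical linear space spanned by the cocircuits of a rank-`ρ` Plücker
vector. -/
def cospan {ι : Type*} [DecidableEq ι] (ρ : ℕ) (q : Finset ι → S) :
    Set (ι → S) :=
  spanS {g | ∃ C : Finset ι, C.card = ρ - 1 ∧ g = cocirc q C}

variable {n e : ℕ}

/-- The `(X, Y)` entry of the Macaulay matrix of `f`: the coefficient of the
monomial `Y` in `X·f`. -/
def macEnt (f : Multiset (Fin (n + 1)) → S) {c d : ℕ}
    (X : Sym (Fin (n + 1)) c) (Y : Sym (Fin (n + 1)) d) : S :=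
  if X.toMultiset ≤ Y.toMultiset then f (Y.toMultiset - X.toMultiset) else 0

/-- The Plücker coordinates of the stable sum of the rows of the Macaulay
matrix `D_d(f)`: tropical maximal minors, i.e. the tropical sum over all
systems of distinct representatives of the products of entries. -/
def macPlucker (f : Multiset (Fin (n + 1)) → S) (e d : ℕ)
    (B : Finset (Sym (Fin (n + 1)) d)) : S :=
  Finset.univ.sup fun φ : Sym (Fin (n + 1)) (d - e) → Sym (Fin (n + 1)) d =>
    if Function.Injective φ ∧ Finset.univ.image φ = B then
      ∏ X : Sym (Fin (n + 1)) (d - e), macEnt f X (φ X)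
    else 0

/-- Multiplication by the variable `x_i`, as a map from degree-`d` vectors to
degree-`(d+1)` vectors. -/
def mulVar (i : Fin (n + 1)) {d : ℕ} (v : Sym (Fin (n + 1)) d → S) :
    Sym (Fin (n + 1)) (d + 1) → S :=
  fun Y => Finset.univ.sup fun X : Sym (Fin (n + 1)) d =>
    if Y.toMultiset = i ::ₘ X.toMultiset then v X else 0

section SpanHelpers

variable {S : Type*} [LinearOrderedCommGroupWithZero S]

lemma subset_spanS {ι : Type*} (G : Set (ι → S)) : G ⊆ spanS G := by
  intro g hg
  rw [spanS, Set.mem_sInter]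
  exact fun M hM => hM.2 hg

lemma spanS_le {ι : Type*} {G M : Set (ι → S)} (hM : IsSubmodS M) (hG : G ⊆ M) :
    spanS G ⊆ M := Set.sInter_subset_of_mem ⟨hM, hG⟩

lemma isSubmodS_spanS {ι : Type*} (G : Set (ι → S)) : IsSubmodS (spanS G) := by
  refine ⟨?_, ?_, ?_⟩
  · rw [spanS, Set.mem_sInter]; exact fun M hM => hM.1.1
  · intro v hv w hw
    rw [spanS, Set.mem_sInter]
    intro M hM
    exact hM.1.2.1 v (Set.mem_sInter.mp hv M hM) w (Set.mem_sInter.mp hw M hM)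
  · intro c v hv
    rw [spanS, Set.mem_sInter]
    intro M hM
    exact hM.1.2.2 c v (Set.mem_sInter.mp hv M hM)

lemma zero_mem_spanS {ι : Type*} (G : Set (ι → S)) : (fun _ => (0:S)) ∈ spanS G :=
  (isSubmodS_spanS G).1

lemma smul_mem_spanS {ι : Type*} {G : Set (ι → S)} (c : S) {v : ι → S}
    (hv : v ∈ spanS G) : (fun z => c * v z) ∈ spanS G :=
  (isSubmodS_spanS G).2.2 c v hv

end SpanHelpers

section MinorAbstract

variable {S : Type*} [LinearOrderedCommGroupWithZero S]
variable {R ι : Type*} [Fintype R] [DecidableEq R] [Fintype ι] [DecidableEq ι]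

/-- Tropical maximal minor of the matrix `w` on column set `B`. -/
def minor (w : R → ι → S) (B : Finset ι) : S :=
  Finset.univ.sup fun φ : R → ι =>
    if Function.Injective φ ∧ Finset.univ.image φ = B then ∏ r, w r (φ r) else 0

lemma minor_le (w : R → ι → S) {φ : R → ι} (h1 : Function.Injective φ)
    {B : Finset ι} (h2 : Finset.univ.image φ = B) :
    (∏ r, w r (φ r)) ≤ minor w B := by
  have h := Finset.le_sup (f := fun φ : R → ι =>
    if Function.Injective φ ∧ Finset.univ.image φ = B then ∏ r, w r (φ r) else 0)
    (Finset.mem_univ φ)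
  rwa [if_pos (And.intro h1 h2)] at h

lemma minor_attain {w : R → ι → S} {B : Finset ι} (h : minor w B ≠ 0) :
    ∃ φ : R → ι, Function.Injective φ ∧ Finset.univ.image φ = B ∧
      minor w B = ∏ r, w r (φ r) := by
  have hne : (Finset.univ : Finset (R → ι)).Nonempty := by
    by_contra hc
    rw [Finset.not_nonempty_iff_eq_empty] at hc
    rw [minor, hc] at h
    exact h rfl
  obtain ⟨φ, -, hφ⟩ := Finset.exists_mem_eq_sup _ hne (fun φ : R → ι =>
    if Function.Injective φ ∧ Finset.univ.image φ = B then ∏ r, w r (φ r) else 0)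
  rw [minor] at h ⊢
  rw [hφ] at h ⊢
  by_cases hc : Function.Injective φ ∧ Finset.univ.image φ = B
  · exact ⟨φ, hc.1, hc.2, if_pos hc⟩
  · rw [if_neg hc] at h
    exact absurd rfl h

lemma minor_card {w : R → ι → S} {B : Finset ι} (h : minor w B ≠ 0) :
    B.card = Fintype.card R := by
  obtain ⟨φ, h1, h2, -⟩ := minor_attain h
  rw [← h2, Finset.card_image_of_injective _ h1, Finset.card_univ]

lemma minor_dead {w : R → ι → S} {B : Finset ι} {y : ι} (hy : y ∈ B)
    (h0 : ∀ r, w r y = 0) : minor w B = 0 := by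
  apply le_antisymm _ zero_le'
  apply Finset.sup_le
  intro φ _
  by_cases hc : Function.Injective φ ∧ Finset.univ.image φ = B
  · rw [if_pos hc]
    have hy' : y ∈ Finset.univ.image φ := by rw [hc.2]; exact hy
    obtain ⟨r, -, hr⟩ := Finset.mem_image.mp hy'
    exact le_of_eq (Finset.prod_eq_zero (Finset.mem_univ r) (by rw [hr]; exact h0 r))
  · rw [if_neg hc]

lemma minor_ne_zero {w : R → ι → S} {φ : R → ι} (h1 : Function.Injective φ)
    (h2 : ∀ r, w r (φ r) ≠ 0) : minor w (Finset.univ.image φ) ≠ 0 := by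
  have hp : (∏ r, w r (φ r)) ≠ 0 := Finset.prod_ne_zero_iff.mpr fun r _ => h2 r
  intro hz
  exact hp (le_antisymm (hz ▸ minor_le w h1 rfl) zero_le')

lemma minor_reindex_le {R' : Type*} [Fintype R'] [DecidableEq R'] (E : R ≃ R')
    (w : R' → ι → S) (B : Finset ι) :
    minor (fun r => w (E r)) B ≤ minor w B := by
  apply Finset.sup_le
  intro φ _
  by_cases hc : Function.Injective φ ∧ Finset.univ.image φ = B
  · rw [if_pos hc]
    have h1 : Function.Injective (φ ∘ E.symm) := hc.1.comp E.symm.injective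
    have h2 : Finset.univ.image (φ ∘ E.symm) = B := by
      rw [← hc.2]
      ext y
      simp only [Finset.mem_image, Finset.mem_univ, true_and, Function.comp]
      constructor
      · rintro ⟨r', rfl⟩; exact ⟨E.symm r', rfl⟩
      · rintro ⟨r, rfl⟩; exact ⟨E r, by simp⟩
    have hle := minor_le w h1 h2
    have he : (∏ r' : R', w r' ((φ ∘ E.symm) r')) = ∏ r : R, w (E r) (φ r) := by
      simp only [Function.comp_apply]
      rw [← Equiv.prod_comp E (fun r' => w r' (φ (E.symm r')))]
      simp
    rw [he] at hle
    exact hle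
  · rw [if_neg hc]
    exact zero_le'

lemma minor_reindex {R' : Type*} [Fintype R'] [DecidableEq R'] (E : R ≃ R')
    (w : R' → ι → S) (B : Finset ι) :
    minor (fun r => w (E r)) B = minor w B := by
  apply le_antisymm (minor_reindex_le E w B)
  have := minor_reindex_le E.symm (fun r => w (E r)) B
  simpa using this

end MinorAbstract
set_option linter.unusedSectionVars false
set_option linter.unusedVariables false
section Exchange

variable {S : Type*} [LinearOrderedCommGroupWithZero S]
variable {R ι : Type*} [Fintype R] [DecidableEq R] [Fintype ι] [DecidableEq ι]

/-- One step of the alternating path: from a column `c`, find a row matched to it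
by `τ` and move to the column matched to that row by `σ`. -/
noncomputable def nextCol (σ τ : R → ι) : ι → Option ι := fun c =>
  if h : ∃ r, τ r = c then some (σ h.choose) else none

/-- The alternating path in the union of two matchings, starting at column `i`. -/
noncomputable def pathSeq (σ τ : R → ι) (i : ι) : ℕ → Option ι
  | 0 => some i
  | (t+1) => (pathSeq σ τ i t).bind (nextCol σ τ)

lemma nextCol_eq_some {σ τ : R → ι} {c x : ι} (h : nextCol σ τ c = some x) :
    ∃ r, τ r = c ∧ σ r = x := by
  unfold nextCol at h
  by_cases hex : ∃ r, τ r = c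
  · rw [dif_pos hex] at h
    exact ⟨hex.choose, hex.choose_spec, Option.some_inj.mp h⟩
  · rw [dif_neg hex] at h
    exact absurd h (by simp)

lemma nextCol_inj {σ τ : R → ι} (hσ : Function.Injective σ) (hτ : Function.Injective τ)
    {c c' x : ι} (h : nextCol σ τ c = some x) (h' : nextCol σ τ c' = some x) : c = c' := by
  obtain ⟨r, hr1, hr2⟩ := nextCol_eq_some h
  obtain ⟨r', hr1', hr2'⟩ := nextCol_eq_some h'
  rw [← hr1, ← hr1']
  exact congrArg τ (hσ (hr2.trans hr2'.symm))

lemma pathSeq_ne (σ τ : R → ι) (hσ : Function.Injective σ) (hτ : Function.Injective τ)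
    {i : ι} (hi : ∀ r, σ r ≠ i) :
    ∀ t s x, s < t → pathSeq σ τ i s = some x → pathSeq σ τ i t = some x → False := by
  intro t
  induction t with
  | zero => intro s x hs _ _; omega
  | succ t ih =>
    intro s x hs h1 h2
    rw [pathSeq] at h2
    obtain ⟨c, hc1, hc2⟩ := Option.bind_eq_some_iff.mp h2
    cases s with
    | zero =>
      obtain ⟨r, -, hr⟩ := nextCol_eq_some hc2
      have hx : x = i := (Option.some_inj.mp h1).symm
      exact hi r (hr.trans hx)
    | succ s =>
      rw [pathSeq] at h1
      obtain ⟨c', hc1', hc2'⟩ := Option.bind_eq_some_iff.mp h1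
      have hcc : c' = c := nextCol_inj hσ hτ hc2' hc2
      exact ih s c' (by omega) hc1' (hcc ▸ hc1)

lemma pathSeq_mem {σ τ : R → ι} {i : ι} :
    ∀ t x, pathSeq σ τ i t = some x → x ∈ insert i (Finset.univ.image σ) := by
  intro t x h
  cases t with
  | zero =>
    rw [pathSeq] at h
    rw [Option.some_inj.mp h]
    exact Finset.mem_insert_self _ _
  | succ t =>
    rw [pathSeq] at h
    obtain ⟨c, -, hc2⟩ := Option.bind_eq_some_iff.mp h
    obtain ⟨r, -, hr⟩ := nextCol_eq_some hc2
    exact Finset.mem_insert_of_mem (Finset.mem_image.mpr ⟨r, Finset.mem_univ r, hr⟩)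

lemma pathSeq_terminates (σ τ : R → ι) (hσ : Function.Injective σ)
    (hτ : Function.Injective τ) (i : ι) (hi : ∀ r, σ r ≠ i) :
    ∃ T, (pathSeq σ τ i T).isSome ∧ pathSeq σ τ i (T+1) = none := by
  by_contra hc
  push_neg at hc
  have hall : ∀ t, ∃ x, pathSeq σ τ i t = some x := by
    intro t
    induction t with
    | zero => exact ⟨i, rfl⟩
    | succ t ih =>
      obtain ⟨x, hx⟩ := ih
      have h1 : (pathSeq σ τ i t).isSome := by rw [hx]; rfl
      have h2 := hc t h1
      exact Option.ne_none_iff_exists'.mp h2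
  choose g hg using hall
  set F := insert i (Finset.univ.image σ) with hF
  have hmem : ∀ t ∈ Finset.range (F.card + 1), g t ∈ F := fun t _ =>
    pathSeq_mem t (g t) (hg t)
  have hinj : Set.InjOn g (Finset.range (F.card + 1)) := by
    intro s hs t ht hst
    by_contra hne
    rcases Nat.lt_or_ge s t with h | h
    · exact pathSeq_ne σ τ hσ hτ hi t s (g s) h (hg s) (hst ▸ hg t)
    · have h' : t < s := by omega
      exact pathSeq_ne σ τ hσ hτ hi s t (g t) h' (hg t) (hst ▸ hg s)
  have := Finset.card_le_card_of_injOn g hmem hinj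
  rw [Finset.card_range] at this
  omega

lemma minor_swap (w : R → ι → S) {A B : Finset ι} {i : ι}
    (hiA : i ∈ A) (hiB : i ∉ B)
    {σ τ : R → ι} (hσ : Function.Injective σ) (hτ : Function.Injective τ)
    (hσim : Finset.univ.image σ = A.erase i) (hτim : Finset.univ.image τ = insert i B) :
    ∃ jT, jT ∈ A ∧ jT ∉ B ∧ jT ≠ i ∧
      (∏ r, w r (σ r)) * (∏ r, w r (τ r)) ≤
        minor w (A.erase jT) * minor w (insert jT B) := by
  have hi : ∀ r, σ r ≠ i := by
    intro r hr
    have : σ r ∈ Finset.univ.image σ := Finset.mem_image.mpr ⟨r, Finset.mem_univ r, rfl⟩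
    rw [hσim, hr] at this
    exact (Finset.mem_erase.mp this).1 rfl
  obtain ⟨T, hTs, hTn⟩ := pathSeq_terminates σ τ hσ hτ i hi
  -- downward closure of definedness
  have hdown : ∀ t, (pathSeq σ τ i (t+1)).isSome → (pathSeq σ τ i t).isSome := by
    intro t h
    rw [pathSeq] at h
    cases hp : pathSeq σ τ i t with
    | none => rw [hp] at h; simp at h
    | some c => rfl
  have hsome : ∀ t, t ≤ T → (pathSeq σ τ i t).isSome := by
    have key : ∀ k t, t + k = T → (pathSeq σ τ i t).isSome := by
      intro k
      induction k with
      | zero => intro t ht0; rw [show t = T by omega]; exact hTs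
      | succ k ih => intro t ht0; exact hdown t (ih (t+1) (by omega))
    intro t ht
    exact key (T - t) t (by omega)
  set jj : ℕ → ι := fun t => (pathSeq σ τ i t).getD i with hjjdef
  have hjj : ∀ t, t ≤ T → pathSeq σ τ i t = some (jj t) := by
    intro t ht
    have := hsome t ht
    cases hp : pathSeq σ τ i t with
    | none => rw [hp] at this; simp at this
    | some c => simp [hjjdef, hp]
  have hjj0 : jj 0 = i := by simp [hjjdef, pathSeq]
  -- T ≥ 1
  have hT1 : 1 ≤ T := by
    by_contra hT
    have hT0 : T = 0 := by omega
    have hex : ∃ r, τ r = i := by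
      have : i ∈ Finset.univ.image τ := by
        rw [hτim]; exact Finset.mem_insert_self _ _
      obtain ⟨r, -, hr⟩ := Finset.mem_image.mp this
      exact ⟨r, hr⟩
    have : pathSeq σ τ i 1 = some (σ hex.choose) := by
      rw [pathSeq, pathSeq, Option.bind_some, nextCol, dif_pos hex]
    rw [hT0] at hTn
    rw [hTn] at this
    exact absurd this (by simp)
  have hstep : ∀ t, t < T → nextCol σ τ (jj t) = some (jj (t+1)) := by
    intro t ht
    have h1 := hjj t (by omega)
    have h2 := hjj (t+1) (by omega)
    have : pathSeq σ τ i (t+1) = (pathSeq σ τ i t).bind (nextCol σ τ) := rfl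
    rw [h1, h2, Option.bind_some] at this
    exact this.symm
  have hstepr : ∀ t, t < T → ∃ r, τ r = jj t ∧ σ r = jj (t+1) := fun t ht =>
    nextCol_eq_some (hstep t ht)
  have hne : ∀ s t, s ≤ T → t ≤ T → s < t → jj s ≠ jj t := by
    intro s t hsT htT hst heq
    exact pathSeq_ne σ τ hσ hτ hi t s (jj s) hst (hjj s hsT) (heq ▸ hjj t htT)
  have hlast : jj T ∉ insert i B := by
    intro hmem
    rw [← hτim] at hmem
    obtain ⟨r, -, hr⟩ := Finset.mem_image.mp hmem
    have hex : ∃ r', τ r' = jj T := ⟨r, hr⟩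
    have : pathSeq σ τ i (T+1) = some (σ hex.choose) := by
      have h0 : pathSeq σ τ i (T+1) = (pathSeq σ τ i T).bind (nextCol σ τ) := rfl
      rw [hjj T le_rfl, Option.bind_some, nextCol, dif_pos hex] at h0
      exact h0
    rw [hTn] at this
    exact absurd this (by simp)
  have hmemσ : ∀ t, 1 ≤ t → t ≤ T → jj t ∈ A.erase i := by
    intro t h1 h2
    obtain ⟨r, -, hr⟩ := hstepr (t-1) (by omega)
    have h3 : jj t = σ r := by rw [hr]; congr 1; omega
    rw [h3, ← hσim]
    exact Finset.mem_image.mpr ⟨r, Finset.mem_univ r, rfl⟩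
  have hmemτ : ∀ t, t < T → jj t ∈ insert i B := by
    intro t ht
    obtain ⟨r, hr, -⟩ := hstepr t ht
    rw [← hr, ← hτim]
    exact Finset.mem_image.mpr ⟨r, Finset.mem_univ r, rfl⟩
  have hjTA : jj T ∈ A := (Finset.mem_erase.mp (hmemσ T hT1 le_rfl)).2
  have hjTi : jj T ≠ i := (Finset.mem_erase.mp (hmemσ T hT1 le_rfl)).1
  have hjTB : jj T ∉ B := fun h => hlast (Finset.mem_insert_of_mem h)
  set JS : Finset ι := (Finset.range T).image (fun t => jj (t+1)) with hJS
  have memJS : ∀ x, x ∈ JS ↔ ∃ t, t < T ∧ jj (t+1) = x := by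
    intro x
    simp [hJS, Finset.mem_image, Finset.mem_range]
  have hkey : ∀ r t, t < T → σ r = jj (t+1) → τ r = jj t := by
    intro r t ht hr
    obtain ⟨r', hr1, hr2⟩ := hstepr t ht
    have : r = r' := hσ (hr.trans hr2.symm)
    rw [this, hr1]
  set σ' : R → ι := fun r => if σ r ∈ JS then τ r else σ r with hσ'
  set τ' : R → ι := fun r => if σ r ∈ JS then σ r else τ r with hτ'
  have hjTJS : jj T ∈ JS := (memJS _).mpr ⟨T-1, by omega, by congr 1; omega⟩
  -- injectivity of σ'
  have hσ'inj : Function.Injective σ' := by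
    intro r r' h
    simp only [hσ'] at h
    by_cases h1 : σ r ∈ JS <;> by_cases h2 : σ r' ∈ JS
    · rw [if_pos h1, if_pos h2] at h; exact hτ h
    · rw [if_pos h1, if_neg h2] at h
      obtain ⟨t, ht, hts⟩ := (memJS _).mp h1
      have hτr : τ r = jj t := hkey r t ht hts.symm
      exfalso
      rcases Nat.eq_zero_or_pos t with h0 | h0
      · rw [h0, hjj0] at hτr
        exact hi r' (by rw [← h, hτr])
      · have : σ r' ∈ JS := by
          rw [← h, hτr]
          exact (memJS _).mpr ⟨t-1, by omega, by congr 1; omega⟩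
        exact h2 this
    · rw [if_neg h1, if_pos h2] at h
      obtain ⟨t, ht, hts⟩ := (memJS _).mp h2
      have hτr : τ r' = jj t := hkey r' t ht hts.symm
      exfalso
      rcases Nat.eq_zero_or_pos t with h0 | h0
      · rw [h0, hjj0] at hτr
        exact hi r (by rw [h, hτr])
      · have : σ r ∈ JS := by
          rw [h, hτr]
          exact (memJS _).mpr ⟨t-1, by omega, by congr 1; omega⟩
        exact h1 this
    · rw [if_neg h1, if_neg h2] at h; exact hσ h
  -- injectivity of τ'
  have hτ'inj : Function.Injective τ' := by
    intro r r' h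
    simp only [hτ'] at h
    by_cases h1 : σ r ∈ JS <;> by_cases h2 : σ r' ∈ JS
    · rw [if_pos h1, if_pos h2] at h; exact hσ h
    · rw [if_pos h1, if_neg h2] at h
      obtain ⟨t, ht, hts⟩ := (memJS _).mp h1
      exfalso
      rcases Nat.lt_or_ge (t+1) T with hlt | hge
      · obtain ⟨r'', hr1, hr2⟩ := hstepr (t+1) hlt
        have : r' = r'' := hτ (by rw [← h, ← hts, hr1])
        have : σ r' ∈ JS := by
          rw [this, hr2]
          exact (memJS _).mpr ⟨t+1, hlt, rfl⟩
        exact h2 this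
      · have htT : t + 1 = T := by omega
        apply hlast
        rw [← htT, hts, h, ← hτim]
        exact Finset.mem_image.mpr ⟨r', Finset.mem_univ r', rfl⟩
    · rw [if_neg h1, if_pos h2] at h
      obtain ⟨t, ht, hts⟩ := (memJS _).mp h2
      exfalso
      rcases Nat.lt_or_ge (t+1) T with hlt | hge
      · obtain ⟨r'', hr1, hr2⟩ := hstepr (t+1) hlt
        have : r = r'' := hτ (by rw [h, ← hts, hr1])
        have : σ r ∈ JS := by
          rw [this, hr2]
          exact (memJS _).mpr ⟨t+1, hlt, rfl⟩
        exact h1 this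
      · have htT : t + 1 = T := by omega
        apply hlast
        rw [← htT, hts, ← h, ← hτim]
        exact Finset.mem_image.mpr ⟨r, Finset.mem_univ r, rfl⟩
    · rw [if_neg h1, if_neg h2] at h; exact hτ h
  -- cardinalities
  have hcardσ : (Finset.univ.image σ).card = Fintype.card R := by
    rw [Finset.card_image_of_injective _ hσ, Finset.card_univ]
  have hcardA : (A.erase (jj T)).card = (A.erase i).card := by
    rw [Finset.card_erase_of_mem hjTA, Finset.card_erase_of_mem hiA]
  -- image of σ'
  have hσ'im : Finset.univ.image σ' = A.erase (jj T) := by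
    apply Finset.eq_of_subset_of_card_le
    · intro x hx
      obtain ⟨r, -, hr⟩ := Finset.mem_image.mp hx
      simp only [hσ'] at hr
      by_cases h1 : σ r ∈ JS
      · rw [if_pos h1] at hr
        obtain ⟨t, ht, hts⟩ := (memJS _).mp h1
        have hτr : τ r = jj t := hkey r t ht hts.symm
        rcases Nat.eq_zero_or_pos t with h0 | h0
        · rw [h0, hjj0] at hτr
          rw [← hr, hτr]
          exact Finset.mem_erase.mpr ⟨fun he => hjTi he.symm, hiA⟩
        · have hmem := hmemσ t h0 (by omega)
          rw [← hr, hτr]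
          refine Finset.mem_erase.mpr ⟨?_, (Finset.mem_erase.mp hmem).2⟩
          exact hne t T (by omega) le_rfl (by omega)
      · rw [if_neg h1] at hr
        have hmem : σ r ∈ A.erase i := by
          rw [← hσim]; exact Finset.mem_image.mpr ⟨r, Finset.mem_univ r, rfl⟩
        rw [← hr]
        refine Finset.mem_erase.mpr ⟨?_, (Finset.mem_erase.mp hmem).2⟩
        intro he
        exact h1 (he ▸ hjTJS)
    · rw [hcardA, ← hσim, hcardσ, Finset.card_image_of_injective _ hσ'inj,
        Finset.card_univ]
  -- image of τ'
  have hcardτ : (Finset.univ.image τ).card = Fintype.card R := by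
    rw [Finset.card_image_of_injective _ hτ, Finset.card_univ]
  have hcardB : (insert (jj T) B).card = (insert i B).card := by
    rw [Finset.card_insert_of_notMem hjTB, Finset.card_insert_of_notMem hiB]
  have hτ'im : Finset.univ.image τ' = insert (jj T) B := by
    apply Finset.eq_of_subset_of_card_le
    · intro x hx
      obtain ⟨r, -, hr⟩ := Finset.mem_image.mp hx
      simp only [hτ'] at hr
      by_cases h1 : σ r ∈ JS
      · rw [if_pos h1] at hr
        obtain ⟨t, ht, hts⟩ := (memJS _).mp h1
        rcases Nat.lt_or_ge (t+1) T with hlt | hge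
        · have := hmemτ (t+1) hlt
          have hnei : jj (t+1) ≠ i := by
            rw [← hjj0]
            intro he
            exact hne 0 (t+1) (by omega) (by omega) (by omega) he.symm
          rw [← hr, ← hts]
          rcases Finset.mem_insert.mp this with he | he
          · exact absurd he hnei
          · exact Finset.mem_insert_of_mem he
        · have : t + 1 = T := by omega
          rw [← hr, ← hts, this]
          exact Finset.mem_insert_self _ _
      · rw [if_neg h1] at hr
        have hmem : τ r ∈ insert i B := by
          rw [← hτim]; exact Finset.mem_image.mpr ⟨r, Finset.mem_univ r, rfl⟩
        rcases Finset.mem_insert.mp hmem with he | he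
        · exfalso
          obtain ⟨r', hr1, hr2⟩ := hstepr 0 (by omega)
          rw [hjj0] at hr1
          have : r = r' := hτ (he.trans hr1.symm)
          apply h1
          rw [this, hr2]
          exact (memJS _).mpr ⟨0, by omega, rfl⟩
        · rw [← hr]
          exact Finset.mem_insert_of_mem he
    · rw [hcardB, ← hτim, hcardτ, Finset.card_image_of_injective _ hτ'inj,
        Finset.card_univ]
  -- products
  have hprod : (∏ r, w r (σ' r)) * (∏ r, w r (τ' r)) =
      (∏ r, w r (σ r)) * (∏ r, w r (τ r)) := by
    rw [← Finset.prod_mul_distrib, ← Finset.prod_mul_distrib]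
    apply Finset.prod_congr rfl
    intro r _
    simp only [hσ', hτ']
    by_cases h1 : σ r ∈ JS
    · rw [if_pos h1, if_pos h1, mul_comm]
    · rw [if_neg h1, if_neg h1]
  refine ⟨jj T, hjTA, hjTB, hjTi, ?_⟩
  rw [← hprod]
  exact mul_le_mul' (minor_le w hσ'inj hσ'im) (minor_le w hτ'inj hτ'im)

lemma minor_exchange (w : R → ι → S) (A B : Finset ι) :
    TropVanishes (A \ B) fun c => minor w (A.erase c) * minor w (insert c B) := by
  intro j hj
  set T := A \ B with hT
  set g : ι → S := fun c => minor w (A.erase c) * minor w (insert c B) with hg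
  apply le_antisymm (Finset.sup_mono (Finset.erase_subset _ _))
  by_cases hM : T.sup g = 0
  · rw [hM]; exact zero_le'
  have hTne : T.Nonempty := by
    by_contra hc
    rw [Finset.not_nonempty_iff_eq_empty] at hc
    rw [hc, Finset.sup_empty] at hM
    exact hM rfl
  obtain ⟨c, hcT, hc⟩ := Finset.exists_mem_eq_sup T hTne g
  by_cases hcj : c = j
  · subst hcj
    have hgc : g c ≠ 0 := by rw [← hc]; exact hM
    have h1 : minor w (A.erase c) ≠ 0 := left_ne_zero_of_mul hgc
    have h2 : minor w (insert c B) ≠ 0 := right_ne_zero_of_mul hgc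
    obtain ⟨σ, hσ1, hσ2, hσ3⟩ := minor_attain h1
    obtain ⟨τ, hτ1, hτ2, hτ3⟩ := minor_attain h2
    have hcA : c ∈ A := (Finset.mem_sdiff.mp hcT).1
    have hcB : c ∉ B := (Finset.mem_sdiff.mp hcT).2
    obtain ⟨jT, hjA, hjB, hjne, hle⟩ := minor_swap w hcA hcB hσ1 hτ1 hσ2 hτ2
    have hsup : T.sup g ≤ g jT := by
      rw [hc, hg]
      simp only []
      rw [hσ3, hτ3]
      exact hle
    refine le_trans hsup (Finset.le_sup ?_)
    exact Finset.mem_erase.mpr ⟨hjne, Finset.mem_sdiff.mpr ⟨hjA, hjB⟩⟩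
  · exact le_trans (le_of_eq hc) (Finset.le_sup (Finset.mem_erase.mpr ⟨fun h => hcj h, hcT⟩))

end Exchange
section Split

variable {S : Type*} [LinearOrderedCommGroupWithZero S]
variable {R ι : Type*} [Fintype R] [DecidableEq R] [Fintype ι] [DecidableEq ι]
variable {R₀ : Type*} [Fintype R₀] [DecidableEq R₀]
variable {κ : Type*} [Fintype κ] [DecidableEq κ]

lemma minor_confine (w1 : R → ι → S) (w0 : R₀ → ι → S) {B' G : Finset ι}
    (hG : G.card < Fintype.card R)
    (hvan : ∀ (r : R), ∀ z ∈ B', z ∉ G → w1 r z = 0) :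
    minor (Sum.elim w1 w0) B' = 0 := by
  apply le_antisymm _ zero_le'
  apply Finset.sup_le
  intro φ _
  by_cases hc : Function.Injective φ ∧ Finset.univ.image φ = B'
  · rw [if_pos hc]
    by_cases hz : (∏ p, Sum.elim w1 w0 p (φ p)) = 0
    · exact le_of_eq hz
    exfalso
    have hall := Finset.prod_ne_zero_iff.mp hz
    have h1 : ∀ r : R, φ (Sum.inl r) ∈ G := by
      intro r
      by_contra hg
      have hmem : φ (Sum.inl r) ∈ B' := by
        rw [← hc.2]
        exact Finset.mem_image.mpr ⟨Sum.inl r, Finset.mem_univ _, rfl⟩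
      exact hall (Sum.inl r) (Finset.mem_univ _) (hvan r _ hmem hg)
    have hle : (Finset.univ : Finset R).card ≤ G.card := by
      apply Finset.card_le_card_of_injOn (fun r => φ (Sum.inl r))
        (fun r _ => h1 r)
      intro r _ r' _ h
      exact Sum.inl_injective (hc.1 h)
    rw [Finset.card_univ] at hle
    omega
  · rw [if_neg hc]

lemma minor_union (w1 : R → ι → S) (w0 : R₀ → ι → S)
    {j : κ → ι} (hj : Function.Injective j)
    {B : Finset κ} (hB : B.card = Fintype.card R)
    {D : Finset ι} (hdisj : ∀ y ∈ B, j y ∉ D)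
    (hvan : ∀ (r : R), ∀ z ∈ D, w1 r z = 0) :
    minor (Sum.elim w1 w0) (B.image j ∪ D) =
      minor (fun r y => w1 r (j y)) B * minor w0 D := by
  apply le_antisymm
  · apply Finset.sup_le
    intro φ _
    by_cases hc : Function.Injective φ ∧ Finset.univ.image φ = B.image j ∪ D
    · rw [if_pos hc]
      by_cases hz : (∏ p, Sum.elim w1 w0 p (φ p)) = 0
      · rw [hz]; exact zero_le'
      have hall := Finset.prod_ne_zero_iff.mp hz
      have hinlinj : Function.Injective (fun r : R => φ (Sum.inl r)) :=
        fun r r' h => Sum.inl_injective (hc.1 h)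
      -- inl rows land in B.image j
      have h1 : ∀ r : R, φ (Sum.inl r) ∈ B.image j := by
        intro r
        have hmem : φ (Sum.inl r) ∈ B.image j ∪ D := by
          rw [← hc.2]
          exact Finset.mem_image.mpr ⟨Sum.inl r, Finset.mem_univ _, rfl⟩
        rcases Finset.mem_union.mp hmem with h | h
        · exact h
        · exact absurd (hvan r _ h) (hall (Sum.inl r) (Finset.mem_univ _))
      have hinlim : Finset.univ.image (fun r : R => φ (Sum.inl r)) = B.image j := by
        apply Finset.eq_of_subset_of_card_le
        · intro z hz'
          obtain ⟨r, -, hr⟩ := Finset.mem_image.mp hz'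
          rw [← hr]; exact h1 r
        · rw [Finset.card_image_of_injective _ hj,
            Finset.card_image_of_injective _ hinlinj, Finset.card_univ, hB]
      -- extract the small-column function
      have hex : ∀ r : R, ∃ y, y ∈ B ∧ j y = φ (Sum.inl r) := by
        intro r
        obtain ⟨y, hy, hyj⟩ := Finset.mem_image.mp (h1 r)
        exact ⟨y, hy, hyj⟩
      choose yR hyB hyj using hex
      have hyinj : Function.Injective yR := by
        intro r r' h
        have : φ (Sum.inl r) = φ (Sum.inl r') := by rw [← hyj, ← hyj, h]
        exact Sum.inl_injective (hc.1 this)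
      have hyim : Finset.univ.image yR = B := by
        apply Finset.eq_of_subset_of_card_le
        · intro y hy
          obtain ⟨r, -, hr⟩ := Finset.mem_image.mp hy
          rw [← hr]; exact hyB r
        · rw [Finset.card_image_of_injective _ hyinj, Finset.card_univ, hB]
      -- inr rows land in D
      have h0im : Finset.univ.image (fun r₀ : R₀ => φ (Sum.inr r₀)) = D := by
        apply Finset.Subset.antisymm
        · intro z hz'
          obtain ⟨r₀, -, hr₀⟩ := Finset.mem_image.mp hz'
          have hmem : z ∈ B.image j ∪ D := by
            rw [← hc.2, ← hr₀]
            exact Finset.mem_image.mpr ⟨Sum.inr r₀, Finset.mem_univ _, rfl⟩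
          rcases Finset.mem_union.mp hmem with h | h
          · exfalso
            rw [← hinlim] at h
            obtain ⟨r, -, hr⟩ := Finset.mem_image.mp h
            have := hc.1 (hr.trans hr₀.symm)
            simp at this
          · exact h
        · intro z hz'
          have hmem : z ∈ Finset.univ.image φ := by
            rw [hc.2]; exact Finset.mem_union_right _ hz'
          obtain ⟨p, -, hp⟩ := Finset.mem_image.mp hmem
          cases p with
          | inl r =>
            exfalso
            have : z ∈ B.image j := by rw [← hp]; exact h1 r
            obtain ⟨y, hy, hyz⟩ := Finset.mem_image.mp this
            exact hdisj y hy (hyz ▸ hz')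
          | inr r₀ =>
            exact Finset.mem_image.mpr ⟨r₀, Finset.mem_univ _, hp⟩
      have h0inj : Function.Injective (fun r₀ : R₀ => φ (Sum.inr r₀)) :=
        fun r r' h => Sum.inr_injective (hc.1 h)
      -- split the product
      have hsplit : (∏ p, Sum.elim w1 w0 p (φ p)) =
          (∏ r : R, w1 r (j (yR r))) * ∏ r₀ : R₀, w0 r₀ (φ (Sum.inr r₀)) := by
        rw [Fintype.prod_sum_type]
        congr 1
        apply Finset.prod_congr rfl
        intro r _
        rw [hyj r]
        rfl
      rw [hsplit]
      exact mul_le_mul' (minor_le (fun r y => w1 r (j y)) hyinj hyim) (minor_le w0 h0inj h0im)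
    · rw [if_neg hc]; exact zero_le'
  · by_cases hz : minor (fun r y => w1 r (j y)) B * minor w0 D = 0
    · rw [hz]; exact zero_le'
    have h1 : minor (fun r y => w1 r (j y)) B ≠ 0 := left_ne_zero_of_mul hz
    have h0 : minor w0 D ≠ 0 := right_ne_zero_of_mul hz
    obtain ⟨φ1, hφ1i, hφ1im, hφ1v⟩ := minor_attain h1
    obtain ⟨φ0, hφ0i, hφ0im, hφ0v⟩ := minor_attain h0
    set φ : R ⊕ R₀ → ι := Sum.elim (fun r => j (φ1 r)) φ0 with hφ
    have hφinj : Function.Injective φ := by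
      intro p q h
      cases p with
      | inl r =>
        cases q with
        | inl r' =>
          simp only [hφ, Sum.elim_inl] at h
          rw [hφ1i (hj h)]
        | inr r₀ =>
          exfalso
          simp only [hφ, Sum.elim_inl, Sum.elim_inr] at h
          have hmem : φ0 r₀ ∈ D := by
            rw [← hφ0im]; exact Finset.mem_image.mpr ⟨r₀, Finset.mem_univ _, rfl⟩
          have hyB : φ1 r ∈ B := by
            rw [← hφ1im]; exact Finset.mem_image.mpr ⟨r, Finset.mem_univ _, rfl⟩
          exact hdisj _ hyB (h ▸ hmem)
      | inr r₀ =>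
        cases q with
        | inl r' =>
          exfalso
          simp only [hφ, Sum.elim_inl, Sum.elim_inr] at h
          have hmem : φ0 r₀ ∈ D := by
            rw [← hφ0im]; exact Finset.mem_image.mpr ⟨r₀, Finset.mem_univ _, rfl⟩
          have hyB : φ1 r' ∈ B := by
            rw [← hφ1im]; exact Finset.mem_image.mpr ⟨r', Finset.mem_univ _, rfl⟩
          exact hdisj _ hyB (h ▸ hmem)
        | inr r₀' =>
          simp only [hφ, Sum.elim_inr] at h
          rw [hφ0i h]
    have hφim : Finset.univ.image φ = B.image j ∪ D := by
      ext z
      simp only [Finset.mem_image, Finset.mem_union, Finset.mem_univ, true_and]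
      constructor
      · rintro ⟨p, rfl⟩
        cases p with
        | inl r =>
          left
          have : φ1 r ∈ B := by
            rw [← hφ1im]; exact Finset.mem_image.mpr ⟨r, Finset.mem_univ _, rfl⟩
          exact ⟨φ1 r, this, rfl⟩
        | inr r₀ =>
          right
          rw [← hφ0im]
          exact Finset.mem_image.mpr ⟨r₀, Finset.mem_univ _, rfl⟩
      · rintro (h | h)
        · obtain ⟨y, hy, hyz⟩ := h
          rw [← hφ1im] at hy
          obtain ⟨r, -, hr⟩ := Finset.mem_image.mp hy
          exact ⟨Sum.inl r, by rw [← hyz, ← hr]; rfl⟩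
        · rw [← hφ0im] at h
          obtain ⟨r₀, -, hr₀⟩ := Finset.mem_image.mp h
          exact ⟨Sum.inr r₀, hr₀⟩
    have hval : (∏ p, Sum.elim w1 w0 p (φ p)) =
        minor (fun r y => w1 r (j y)) B * minor w0 D := by
      rw [Fintype.prod_sum_type, hφ1v, hφ0v]
      rfl
    rw [← hval]
    exact minor_le _ hφinj hφim

end Split
section Concrete

variable {S : Type*} [LinearOrderedCommGroupWithZero S]
variable {n e : ℕ}

lemma card_sym_choose (n k : ℕ) :
    Fintype.card (Sym (Fin (n+1)) k) = (n + k).choose k := by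
  rw [Sym.card_sym_eq_multichoose, Nat.multichoose_eq, Fintype.card_fin]
  congr 1
  omega

instance symNonempty (n k : ℕ) : Nonempty (Sym (Fin (n+1)) k) :=
  ⟨Sym.mk (Multiset.replicate k 0) (by rw [Multiset.card_replicate])⟩

lemma macPlucker_eq_minor (f : Multiset (Fin (n + 1)) → S) (e d : ℕ) :
    macPlucker f e d =
      minor (fun (X : Sym (Fin (n+1)) (d-e)) (Y : Sym (Fin (n+1)) d) => macEnt f X Y) :=
  rfl

/-- Adjoining the variable `i` to a monomial. -/
noncomputable def symCons (i : Fin (n+1)) {a b : ℕ} (h : a + 1 = b)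
    (X : Sym (Fin (n+1)) a) : Sym (Fin (n+1)) b :=
  Sym.mk (i ::ₘ X.toMultiset)
    (by rw [Multiset.card_cons, show Multiset.card X.toMultiset = a from X.2]; exact h)

lemma symCons_coe (i : Fin (n+1)) {a b : ℕ} (h : a + 1 = b) (X : Sym (Fin (n+1)) a) :
    (symCons i h X).toMultiset = i ::ₘ X.toMultiset := rfl

lemma symCons_injective (i : Fin (n+1)) {a b : ℕ} (h : a + 1 = b) :
    Function.Injective (symCons i h) := by
  intro X Y hXY
  apply Sym.coe_injective
  have h2 := congrArg Sym.toMultiset hXY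
  rw [symCons_coe, symCons_coe] at h2
  have := congrArg (fun s => Multiset.erase s i) h2
  simpa [Multiset.erase_cons_head] using this

/-- Multiplying a monomial by a fixed monomial `m`. -/
noncomputable def symAdd {a b : ℕ} (m : Multiset (Fin (n+1)))
    (h : a + Multiset.card m = b) (X : Sym (Fin (n+1)) a) : Sym (Fin (n+1)) b :=
  Sym.mk (X.toMultiset + m)
    (by rw [Multiset.card_add, show Multiset.card X.toMultiset = a from X.2]; exact h)

lemma symAdd_coe {a b : ℕ} (m : Multiset (Fin (n+1))) (h : a + Multiset.card m = b)
    (X : Sym (Fin (n+1)) a) : (symAdd m h X).toMultiset = X.toMultiset + m := rfl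

lemma symAdd_injective {a b : ℕ} (m : Multiset (Fin (n+1)))
    (h : a + Multiset.card m = b) : Function.Injective (symAdd m h) := by
  intro X Y hXY
  apply Sym.coe_injective
  have h2 := congrArg Sym.toMultiset hXY
  rw [symAdd_coe, symAdd_coe] at h2
  exact add_right_cancel h2

lemma macEnt_symAdd (f : Multiset (Fin (n + 1)) → S) {a b : ℕ}
    (m : Multiset (Fin (n+1))) (h : a + Multiset.card m = b) (X : Sym (Fin (n+1)) a) :
    macEnt f X (symAdd m h X) = f m := by
  rw [macEnt, symAdd_coe, if_pos le_self_add, add_tsub_cancel_left]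

lemma macEnt_cons (f : Multiset (Fin (n + 1)) → S) (i : Fin (n+1)) {a b c d' : ℕ}
    (h1 : a + 1 = b) (h2 : c + 1 = d')
    (X : Sym (Fin (n+1)) a) (Y : Sym (Fin (n+1)) c) :
    macEnt f (symCons i h1 X) (symCons i h2 Y) = macEnt f X Y := by
  have e1 : macEnt f (symCons i h1 X) (symCons i h2 Y)
      = if i ::ₘ X.toMultiset ≤ i ::ₘ Y.toMultiset
        then f ((i ::ₘ Y.toMultiset) - (i ::ₘ X.toMultiset)) else 0 := rfl
  rw [e1, macEnt]
  by_cases hle : X.toMultiset ≤ Y.toMultiset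
  · rw [if_pos ((Multiset.cons_le_cons_iff i).mpr hle), if_pos hle]
    congr 1
    rw [← Multiset.singleton_add i X.toMultiset, ← Multiset.singleton_add i Y.toMultiset,
      add_tsub_add_eq_tsub_left]
  · rw [if_neg (fun hc => hle ((Multiset.cons_le_cons_iff i).mp hc)), if_neg hle]

/-- The row equivalence: rows of `D_{d+1}(f)` split into rows divisible by `x_i`
(which come from rows of `D_d(f)`) and rows not divisible by `x_i`. -/
noncomputable def rowEquiv (i : Fin (n+1)) (d e : ℕ) (he : e ≤ d) :
    Sym (Fin (n+1)) (d - e) ⊕ {X' : Sym (Fin (n+1)) (d + 1 - e) // i ∉ X'.toMultiset} ≃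
      Sym (Fin (n+1)) (d + 1 - e) where
  toFun := Sum.elim (fun X => symCons i (by omega) X) Subtype.val
  invFun := fun X' =>
    if h : i ∈ X'.toMultiset
    then Sum.inl (Sym.mk (X'.toMultiset.erase i)
      (by rw [Multiset.card_erase_of_mem h,
          show Multiset.card X'.toMultiset = d + 1 - e from X'.2, Nat.pred_eq_sub_one]; omega))
    else Sum.inr ⟨X', h⟩
  left_inv := by
    rintro (X | ⟨X', hX'⟩)
    · dsimp only [Sum.elim_inl]
      rw [dif_pos (by rw [symCons_coe]; exact Multiset.mem_cons_self i _)]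
      congr 1
      apply Sym.coe_injective
      rw [Sym.mk]
      show (symCons i _ X).toMultiset.erase i = X.toMultiset
      rw [symCons_coe, Multiset.erase_cons_head]
    · dsimp only [Sum.elim_inr]
      rw [dif_neg hX']
  right_inv := by
    intro X'
    by_cases h : i ∈ X'.toMultiset
    · simp only [dif_pos h, Sum.elim_inl]
      apply Sym.coe_injective
      rw [symCons_coe]
      show i ::ₘ X'.toMultiset.erase i = X'.toMultiset
      exact Multiset.cons_erase h
    · simp only [dif_neg h, Sum.elim_inr]

lemma mulVar_apply (i : Fin (n+1)) {d : ℕ} (v : Sym (Fin (n+1)) d → S)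
    (Z : Sym (Fin (n+1)) (d+1)) :
    mulVar i v Z = if h : i ∈ Z.toMultiset
      then v (Sym.mk (Z.toMultiset.erase i)
        (by rw [Multiset.card_erase_of_mem h,
            show Multiset.card Z.toMultiset = d + 1 from Z.2]; rfl))
      else 0 := by
  by_cases h : i ∈ Z.toMultiset
  · rw [dif_pos h]
    set X₀ : Sym (Fin (n+1)) d := Sym.mk (Z.toMultiset.erase i)
      (by rw [Multiset.card_erase_of_mem h,
          show Multiset.card Z.toMultiset = d + 1 from Z.2]; rfl) with hX₀
    apply le_antisymm
    · apply Finset.sup_le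
      intro X _
      by_cases hX : Z.toMultiset = i ::ₘ X.toMultiset
      · rw [if_pos hX]
        have hXeq : X = X₀ := by
          apply Sym.coe_injective
          show X.toMultiset = Z.toMultiset.erase i
          rw [hX, Multiset.erase_cons_head]
        rw [hXeq]
      · rw [if_neg hX]
        exact zero_le'
    · have hcond : Z.toMultiset = i ::ₘ X₀.toMultiset := by
        show Z.toMultiset = i ::ₘ Z.toMultiset.erase i
        exact (Multiset.cons_erase h).symm
      have hle := Finset.le_sup (f := fun X : Sym (Fin (n+1)) d =>
        if Z.toMultiset = i ::ₘ X.toMultiset then v X else 0) (Finset.mem_univ X₀)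
      rwa [if_pos hcond] at hle
  · rw [dif_neg h]
    apply le_antisymm _ zero_le'
    apply Finset.sup_le
    intro X _
    rw [if_neg (fun hX => h (by rw [hX]; exact Multiset.mem_cons_self i _))]

lemma mulVar_zero (i : Fin (n+1)) {d : ℕ} :
    mulVar i (fun _ : Sym (Fin (n+1)) d => (0:S)) = fun _ => 0 := by
  funext Z
  rw [mulVar_apply]
  split <;> rfl

lemma mulVar_max (i : Fin (n+1)) {d : ℕ} (v w : Sym (Fin (n+1)) d → S) :
    mulVar i (fun y => max (v y) (w y)) = fun Z => max (mulVar i v Z) (mulVar i w Z) := by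
  funext Z
  rw [mulVar_apply, mulVar_apply, mulVar_apply]
  split
  · rfl
  · rw [max_self]

lemma mulVar_smul (i : Fin (n+1)) {d : ℕ} (c : S) (v : Sym (Fin (n+1)) d → S) :
    mulVar i (fun y => c * v y) = fun Z => c * mulVar i v Z := by
  funext Z
  rw [mulVar_apply, mulVar_apply]
  split
  · rfl
  · rw [mul_zero]

end Concrete
section Concrete2

variable {S : Type*} [LinearOrderedCommGroupWithZero S]
variable {n e : ℕ}

lemma mulVar_eq_of (i : Fin (n+1)) {d : ℕ} (v : Sym (Fin (n+1)) d → S)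
    (Z : Sym (Fin (n+1)) (d+1)) (Y : Sym (Fin (n+1)) d)
    (h : Z.toMultiset = i ::ₘ Y.toMultiset) : mulVar i v Z = v Y := by
  apply le_antisymm
  · apply Finset.sup_le
    intro X _
    by_cases hX : Z.toMultiset = i ::ₘ X.toMultiset
    · rw [if_pos hX]
      have hXeq : X = Y := by
        apply Sym.coe_injective
        have := h.symm.trans hX
        have h2 := congrArg (fun s => Multiset.erase s i) this
        simpa [Multiset.erase_cons_head] using h2.symm
      rw [hXeq]
    · rw [if_neg hX]
      exact zero_le'
  · have hle := Finset.le_sup (f := fun X : Sym (Fin (n+1)) d =>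
      if Z.toMultiset = i ::ₘ X.toMultiset then v X else 0) (Finset.mem_univ Y)
    rwa [if_pos h] at hle

lemma mulVar_eq_zero_of (i : Fin (n+1)) {d : ℕ} (v : Sym (Fin (n+1)) d → S)
    (Z : Sym (Fin (n+1)) (d+1)) (h : i ∉ Z.toMultiset) : mulVar i v Z = 0 := by
  apply le_antisymm _ zero_le'
  apply Finset.sup_le
  intro X _
  rw [if_neg (fun hX => h (by rw [hX]; exact Multiset.mem_cons_self i _))]

/-- The key construction: multiplication by `xᵢ` maps each cocircuit of the
degree-`d` Macaulay matroid into the degree-`(d+1)` tropical linear space. -/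
lemma mulVar_cocirc_mem
    (f : Multiset (Fin (n + 1)) → S)
    (hfsupp : ∀ m, f m ≠ 0 → Multiset.card m = e)
    {d : ℕ} (hd : e ≤ d) (i : Fin (n+1))
    (m0 : Multiset (Fin (n+1))) (hm0 : f m0 ≠ 0) (hm0c : Multiset.card m0 = e)
    (hmin : ∀ m, f m ≠ 0 → Multiset.count i m0 ≤ Multiset.count i m)
    (C : Finset (Sym (Fin (n+1)) d)) (hC : C.card = (n + (d - e)).choose (d - e) - 1) :
    mulVar i (cocirc (macPlucker f e d) C) ∈
      cospan ((n + (d + 1 - e)).choose (d + 1 - e)) (macPlucker f e (d + 1)) := by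
  classical
  have hcardR : Fintype.card (Sym (Fin (n+1)) (d-e)) = (n + (d-e)).choose (d-e) :=
    card_sym_choose n (d-e)
  have hcardR' : Fintype.card (Sym (Fin (n+1)) (d+1-e)) = (n + (d+1-e)).choose (d+1-e) :=
    card_sym_choose n (d+1-e)
  have hRpos : 1 ≤ Fintype.card (Sym (Fin (n+1)) (d-e)) := Fintype.card_pos
  have hde1 : (d - e) + 1 = d + 1 - e := by omega
  have haddc : (d + 1 - e) + Multiset.card m0 = d + 1 := by rw [hm0c]; omega
  set D : Finset (Sym (Fin (n+1)) (d+1)) := Finset.univ.image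
    (fun p : {X' : Sym (Fin (n+1)) (d+1-e) // i ∉ X'.toMultiset} =>
      symAdd m0 haddc p.val) with hDdef
  by_cases hdeg : ∀ c ∈ C, symCons i (rfl : d + 1 = d + 1) c ∉ D
  ·
    have haddinj : Function.Injective
        (fun p : {X' : Sym (Fin (n+1)) (d+1-e) // i ∉ X'.toMultiset} =>
          symAdd m0 haddc p.val) :=
      fun p p' h => Subtype.ext (symAdd_injective m0 haddc h)
    have hDcard : D.card =
        Fintype.card {X' : Sym (Fin (n+1)) (d+1-e) // i ∉ X'.toMultiset} := by
      rw [hDdef, Finset.card_image_of_injective _ haddinj, Finset.card_univ]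
    have hsumcard : Fintype.card (Sym (Fin (n+1)) (d-e)) +
        Fintype.card {X' : Sym (Fin (n+1)) (d+1-e) // i ∉ X'.toMultiset}
        = Fintype.card (Sym (Fin (n+1)) (d+1-e)) := by
      rw [← Fintype.card_sum]
      exact Fintype.card_congr (rowEquiv i d e hd)
    have hjinj : Function.Injective (symCons i (rfl : d + 1 = d + 1)) :=
      symCons_injective i rfl
    set C' : Finset (Sym (Fin (n+1)) (d+1)) :=
      C.image (symCons i (rfl : d + 1 = d + 1)) ∪ D with hC'def
    have hdisj : Disjoint (C.image (symCons i (rfl : d + 1 = d + 1))) D := by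
      rw [Finset.disjoint_left]
      intro z hz
      obtain ⟨c, hc, rfl⟩ := Finset.mem_image.mp hz
      exact hdeg c hc
    have hC'card : C'.card = (n + (d + 1 - e)).choose (d + 1 - e) - 1 := by
      rw [hC'def, Finset.card_union_of_disjoint hdisj,
        Finset.card_image_of_injective _ hjinj, hC, hDcard]
      omega
    have hμpos : minor (fun (p : {X' : Sym (Fin (n+1)) (d+1-e) // i ∉ X'.toMultiset})
        (Z : Sym (Fin (n+1)) (d+1)) => macEnt f p.val Z) D ≠ 0 := by
      rw [hDdef]
      apply minor_ne_zero haddinj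
      intro p
      rw [macEnt_symAdd]
      exact hm0
    have hvanD : ∀ (X : Sym (Fin (n+1)) (d-e)), ∀ Z ∈ D,
        macEnt f (symCons i hde1 X) Z = 0 := by
      intro X Z hZ
      rw [hDdef] at hZ
      obtain ⟨p, -, rfl⟩ := Finset.mem_image.mp hZ
      by_contra hne
      dsimp only [macEnt, symCons_coe] at hne
      by_cases hle : i ::ₘ X.toMultiset ≤ (symAdd m0 haddc p.val).toMultiset
      · erw [if_pos hle] at hne
        have h1 := hmin _ hne
        have h2 : Multiset.count i (symAdd m0 haddc p.val).toMultiset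
            = Multiset.count i m0 := by
          rw [symAdd_coe, Multiset.count_add, Multiset.count_eq_zero.mpr p.2, zero_add]
        have h3 := Multiset.count_le_of_le i hle
        rw [Multiset.count_cons_self] at h3
        rw [Multiset.count_sub, Multiset.count_cons_self] at h1
        omega
      · erw [if_neg hle] at hne
        exact hne rfl
    have hvanZ : ∀ (Z : Sym (Fin (n+1)) (d+1)), i ∉ Z.toMultiset →
        ∀ (X : Sym (Fin (n+1)) (d-e)), macEnt f (symCons i hde1 X) Z = 0 := by
      intro Z hiZ X
      show (if (symCons i hde1 X).toMultiset ≤ Z.toMultiset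
        then f (Z.toMultiset - (symCons i hde1 X).toMultiset) else 0) = 0
      apply if_neg
      intro hle
      rw [symCons_coe] at hle
      exact hiZ (Multiset.mem_of_le hle (Multiset.mem_cons_self i _))
    have hq'sum : ∀ B : Finset (Sym (Fin (n+1)) (d+1)),
        macPlucker f e (d+1) B = minor (Sum.elim
          (fun (X : Sym (Fin (n+1)) (d-e)) (Z : Sym (Fin (n+1)) (d+1)) =>
            macEnt f (symCons i hde1 X) Z)
          (fun (p : {X' : Sym (Fin (n+1)) (d+1-e) // i ∉ X'.toMultiset})
            (Z : Sym (Fin (n+1)) (d+1)) => macEnt f p.val Z)) B := by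
      intro B
      rw [macPlucker_eq_minor]
      rw [← minor_reindex (rowEquiv i d e hd)
        (fun (X' : Sym (Fin (n+1)) (d+1-e)) (Y' : Sym (Fin (n+1)) (d+1)) =>
          macEnt f X' Y') B]
      congr 1
      funext r
      cases r with
      | inl X => rfl
      | inr p => rfl
    have hYcards : ∀ (Y : Sym (Fin (n+1)) d), Y ∉ C →
        (insert Y C).card = Fintype.card (Sym (Fin (n+1)) (d-e)) := by
      intro Y hY
      rw [Finset.card_insert_of_notMem hY, hC]
      omega
    -- pointwise identity
    have hpt : ∀ Z, cocirc (macPlucker f e (d+1)) C' Z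
        = minor (fun (p : {X' : Sym (Fin (n+1)) (d+1-e) // i ∉ X'.toMultiset})
            (Z : Sym (Fin (n+1)) (d+1)) => macEnt f p.val Z) D
          * mulVar i (cocirc (macPlucker f e d) C) Z := by
      intro Z
      by_cases hZC' : Z ∈ C'
      · simp only [cocirc, if_pos hZC']
        have hw0 : mulVar i (cocirc (macPlucker f e d) C) Z = 0 := by
          have hZC'' := hZC'
          rw [hC'def] at hZC''
          rcases Finset.mem_union.mp hZC'' with hZj | hZD
          · obtain ⟨c, hcC, rfl⟩ := Finset.mem_image.mp hZj
            rw [mulVar_eq_of i _ _ c (by rw [symCons_coe])]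
            simp only [cocirc, if_pos hcC]
          · rw [hDdef] at hZD
            obtain ⟨p, -, rfl⟩ := Finset.mem_image.mp hZD
            by_cases hiZ : i ∈ (symAdd m0 haddc p.val).toMultiset
            · have hk1 : 1 ≤ Multiset.count i m0 := by
                have hpos := Multiset.count_pos.mpr hiZ
                rw [symAdd_coe, Multiset.count_add,
                  Multiset.count_eq_zero.mpr p.2, zero_add] at hpos
                omega
              have hYcard : Multiset.card ((symAdd m0 haddc p.val).toMultiset.erase i)
                  = d := by
                rw [Multiset.card_erase_of_mem hiZ,
                  show Multiset.card (symAdd m0 haddc p.val).toMultiset = d + 1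
                    from (symAdd m0 haddc p.val).2]
                rfl
              rw [mulVar_eq_of i _ _ (Sym.mk _ hYcard) (Multiset.cons_erase hiZ).symm]
              have hcY : Multiset.count i (Sym.mk _ hYcard).toMultiset + 1
                  = Multiset.count i m0 := by
                show Multiset.count i ((symAdd m0 haddc p.val).toMultiset.erase i) + 1
                  = Multiset.count i m0
                rw [Multiset.count_erase_self]
                have h2 : Multiset.count i (symAdd m0 haddc p.val).toMultiset
                    = Multiset.count i m0 := by
                  rw [symAdd_coe, Multiset.count_add,
                    Multiset.count_eq_zero.mpr p.2, zero_add]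
                omega
              simp only [cocirc]
              split
              · rfl
              · rw [macPlucker_eq_minor]
                apply minor_dead (Finset.mem_insert_self _ C)
                intro X
                by_contra hne
                simp only [macEnt] at hne
                by_cases hle : X.toMultiset ≤ (Sym.mk _ hYcard).toMultiset
                · rw [if_pos hle] at hne
                  have h1 := hmin _ hne
                  rw [Multiset.count_sub] at h1
                  have h5 : Multiset.count i (Sym.mk _ hYcard).toMultiset
                      - Multiset.count i X.toMultiset
                      ≤ Multiset.count i (Sym.mk _ hYcard).toMultiset := Nat.sub_le _ _
                  omega
                · rw [if_neg hle] at hne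
                  exact hne rfl
            · exact mulVar_eq_zero_of i _ _ hiZ
        rw [hw0, mul_zero]
      · simp only [cocirc, if_neg hZC']
        by_cases hiZ : i ∈ Z.toMultiset
        · -- main computation
          have hYcard : Multiset.card (Z.toMultiset.erase i) = d := by
            rw [Multiset.card_erase_of_mem hiZ,
              show Multiset.card Z.toMultiset = d + 1 from Z.2]
            rfl
          set Y : Sym (Fin (n+1)) d := Sym.mk _ hYcard with hYdef
          have hjY : symCons i (rfl : d + 1 = d + 1) Y = Z := by
            apply Sym.coe_injective
            rw [symCons_coe]
            exact Multiset.cons_erase hiZ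
          have hYC : Y ∉ C := by
            intro hYC
            apply hZC'
            rw [hC'def]
            apply Finset.mem_union_left
            rw [← hjY]
            exact Finset.mem_image_of_mem _ hYC
          rw [hq'sum]
          have hins : insert Z C' = (insert Y C).image (symCons i (rfl : d + 1 = d + 1)) ∪ D := by
            rw [hC'def, Finset.image_insert, hjY, Finset.insert_union]
          rw [hins]
          rw [minor_union
            (fun (X : Sym (Fin (n+1)) (d-e)) (Z : Sym (Fin (n+1)) (d+1)) =>
              macEnt f (symCons i hde1 X) Z)
            (fun (p : {X' : Sym (Fin (n+1)) (d+1-e) // i ∉ X'.toMultiset})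
              (Z : Sym (Fin (n+1)) (d+1)) => macEnt f p.val Z)
            hjinj (hYcards Y hYC) ?_ hvanD]
          · have hw1j : (fun (X : Sym (Fin (n+1)) (d-e)) (y : Sym (Fin (n+1)) d)
                => macEnt f (symCons i hde1 X) (symCons i (rfl : d + 1 = d + 1) y))
                = fun X y => macEnt f X y := by
              funext X y
              exact macEnt_cons f i hde1 rfl X y
            rw [hw1j]
            rw [mulVar_eq_of i _ Z Y (Multiset.cons_erase hiZ).symm]
            simp only [cocirc, if_neg hYC]
            rw [macPlucker_eq_minor]
            exact mul_comm _ _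
          · intro y hy
            rcases Finset.mem_insert.mp hy with rfl | hy
            · rw [hjY]
              intro hZD
              exact hZC' (by rw [hC'def]; exact Finset.mem_union_right _ hZD)
            · exact hdeg y hy
        · rw [hq'sum, mulVar_eq_zero_of i _ Z hiZ, mul_zero]
          apply minor_confine _ _ (G := C.image (symCons i (rfl : d + 1 = d + 1)))
          · rw [Finset.card_image_of_injective _ hjinj, hC]
            omega
          · intro X z hz hzG
            rcases Finset.mem_insert.mp hz with rfl | hz
            · exact hvanZ z hiZ X
            · rw [hC'def] at hz
              rcases Finset.mem_union.mp hz with h | h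
              · exact absurd h hzG
              · exact hvanD X z h
    -- conclude
    have hgen' : cocirc (macPlucker f e (d+1)) C' ∈
        {g | ∃ C'' : Finset (Sym (Fin (n+1)) (d+1)),
          C''.card = (n + (d + 1 - e)).choose (d + 1 - e) - 1
            ∧ g = cocirc (macPlucker f e (d+1)) C''} := ⟨C', hC'card, rfl⟩
    have hmem := smul_mem_spanS
      (minor (fun (p : {X' : Sym (Fin (n+1)) (d+1-e) // i ∉ X'.toMultiset})
        (Z : Sym (Fin (n+1)) (d+1)) => macEnt f p.val Z) D)⁻¹
      (subset_spanS _ hgen')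
    have hfun : mulVar i (cocirc (macPlucker f e d) C)
        = fun Z => (minor (fun (p : {X' : Sym (Fin (n+1)) (d+1-e) // i ∉ X'.toMultiset})
            (Z : Sym (Fin (n+1)) (d+1)) => macEnt f p.val Z) D)⁻¹
          * cocirc (macPlucker f e (d+1)) C' Z := by
      funext Z
      rw [hpt Z, inv_mul_cancel_left₀ hμpos]
    rw [hfun]
    exact hmem
  · -- degenerate case: some column of `C` is dead, so the image is zero
    push_neg at hdeg
    obtain ⟨c, hcC, hcD⟩ := hdeg
    rw [hDdef] at hcD
    obtain ⟨p, -, hp⟩ := Finset.mem_image.mp hcD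
    have h2 : (symAdd m0 haddc p.val).toMultiset = (symCons i rfl c).toMultiset :=
      congrArg _ hp
    rw [symAdd_coe, symCons_coe] at h2
    have h3 := congrArg (Multiset.count i) h2
    rw [Multiset.count_add, Multiset.count_cons_self,
      Multiset.count_eq_zero.mpr p.2, zero_add] at h3
    -- h3 : count i m0 = count i c + 1
    have hdead : ∀ X : Sym (Fin (n+1)) (d-e), macEnt f X c = 0 := by
      intro X
      by_contra hne
      simp only [macEnt] at hne
      by_cases hle : X.toMultiset ≤ c.toMultiset
      · rw [if_pos hle] at hne
        have h4 := hmin _ hne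
        rw [Multiset.count_sub] at h4
        have h5 : Multiset.count i c.toMultiset - Multiset.count i X.toMultiset ≤
            Multiset.count i c.toMultiset := Nat.sub_le _ _
        omega
      · rw [if_neg hle] at hne
        exact hne rfl
    have hzero : mulVar i (cocirc (macPlucker f e d) C) = fun _ => 0 := by
      funext Z
      by_cases hiZ : i ∈ Z.toMultiset
      · have hYcard : Multiset.card (Z.toMultiset.erase i) = d := by
          rw [Multiset.card_erase_of_mem hiZ,
            show Multiset.card Z.toMultiset = d + 1 from Z.2]
          rfl
        rw [mulVar_eq_of i _ Z (Sym.mk _ hYcard) (Multiset.cons_erase hiZ).symm]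
        simp only [cocirc]
        split
        · rfl
        · rw [macPlucker_eq_minor]
          exact minor_dead (Finset.mem_insert_of_mem hcC) hdead
      · exact mulVar_eq_zero_of i _ Z hiZ
    rw [hzero]
    exact zero_mem_spanS _

end Concrete2
theorem macaulay_ideal_is_tropical_ideal
    (f : Multiset (Fin (n + 1)) → S)
    (hfsupp : ∀ m, f m ≠ 0 → Multiset.card m = e)
    (hf0 : ∃ m, f m ≠ 0) :
    ∀ d, e ≤ d →
      IsTropPlucker (Nat.choose (n + (d - e)) (d - e)) (macPlucker f e d) ∧
      ∀ v ∈ cospan (Nat.choose (n + (d - e)) (d - e)) (macPlucker f e d),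
        ∀ i : Fin (n + 1),
          mulVar i v ∈
            cospan (Nat.choose (n + (d + 1 - e)) (d + 1 - e))
              (macPlucker f e (d + 1)) := by
  intro d hd
  have hcardR : Fintype.card (Sym (Fin (n+1)) (d-e)) = (n + (d-e)).choose (d-e) :=
    card_sym_choose n (d-e)
  have hcardR' : Fintype.card (Sym (Fin (n+1)) (d+1-e)) = (n + (d+1-e)).choose (d+1-e) :=
    card_sym_choose n (d+1-e)
  have hRpos : 1 ≤ Fintype.card (Sym (Fin (n+1)) (d-e)) := Fintype.card_pos
  constructor
  · -- Part 1: tropical Plücker vector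
    refine ⟨?_, ?_, ?_⟩
    · -- existence of a nonzero coordinate
      obtain ⟨m, hm⟩ := hf0
      have hmc : Multiset.card m = e := hfsupp m hm
      have hsum : (d - e) + Multiset.card m = d := by rw [hmc]; omega
      refine ⟨Finset.univ.image (symAdd m hsum), ?_⟩
      rw [macPlucker_eq_minor]
      apply minor_ne_zero (symAdd_injective m hsum)
      intro X
      rw [macEnt_symAdd]
      exact hm
    · intro A hA
      rw [macPlucker_eq_minor] at hA
      rw [minor_card hA, hcardR]
    · intro A B _ _
      simp only [macPlucker_eq_minor]
      exact minor_exchange _ A B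
  · -- Part 2: multiplication by xᵢ
    intro v hv i
    -- choose a monomial in the support of f with minimal multiplicity of i
    have hsne : ∃ ms : Sym (Fin (n+1)) e, f ms.toMultiset ≠ 0 := by
      obtain ⟨m, hm⟩ := hf0
      exact ⟨Sym.mk m (hfsupp m hm), hm⟩
    obtain ⟨ms0, hms0, hmin0⟩ := Finset.exists_min_image
      (Finset.univ.filter (fun ms : Sym (Fin (n+1)) e => f ms.toMultiset ≠ 0))
      (fun ms => Multiset.count i ms.toMultiset)
      ⟨hsne.choose, Finset.mem_filter.mpr ⟨Finset.mem_univ _, hsne.choose_spec⟩⟩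
    set m0 : Multiset (Fin (n+1)) := ms0.toMultiset with hm0def
    have hm0 : f m0 ≠ 0 := (Finset.mem_filter.mp hms0).2
    have hm0c : Multiset.card m0 = e := ms0.2
    set k := Multiset.count i m0 with hkdef
    have hmin : ∀ m, f m ≠ 0 → k ≤ Multiset.count i m := by
      intro m hm
      exact hmin0 (Sym.mk m (hfsupp m hm))
        (Finset.mem_filter.mpr ⟨Finset.mem_univ _, hm⟩)
    -- the target span
    set q : Finset (Sym (Fin (n+1)) d) → S := macPlucker f e d with hq
    set q' : Finset (Sym (Fin (n+1)) (d+1)) → S := macPlucker f e (d+1) with hq'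
    set ρ' : ℕ := (n + (d + 1 - e)).choose (d + 1 - e) with hρ'
    set ρd : ℕ := (n + (d - e)).choose (d - e) with hρd
    have key : spanS {g | ∃ C : Finset (Sym (Fin (n+1)) d), C.card = ρd - 1 ∧ g = cocirc q C}
        ⊆ {u : Sym (Fin (n+1)) d → S | mulVar i u ∈ cospan ρ' q'} := by
      apply spanS_le
      · -- it is a submodule
        refine ⟨?_, ?_, ?_⟩
        · show mulVar i (fun _ => 0) ∈ cospan ρ' q'
          rw [mulVar_zero]
          exact zero_mem_spanS _
        · intro v1 h1 v2 h2
          show mulVar i (fun y => max (v1 y) (v2 y)) ∈ cospan ρ' q'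
          rw [mulVar_max]
          exact (isSubmodS_spanS _).2.1 _ h1 _ h2
        · intro c v1 h1
          show mulVar i (fun y => c * v1 y) ∈ cospan ρ' q'
          rw [mulVar_smul]
          exact (isSubmodS_spanS _).2.2 c _ h1
      · -- generators are mapped into the target span
        rintro g ⟨C, hC, rfl⟩
        show mulVar i (cocirc q C) ∈ cospan ρ' q'
        exact mulVar_cocirc_mem f hfsupp hd i m0 hm0 hm0c hmin C hC
    exact key hv

end
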